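/- Fix n ∈ ℕ and real parameters a, b, α, β with (a−b+1|q)_n (2a−β+1|q)_n (a−b−α+1|q)_n ≠ 0, and set λ̃_n = [n]_q [2b−2a+α+β−n−1]_q. Then for every real s, writing ũ_n(s) = ũ_n^{α,β}(x(s),a,b)_q, one has [2s]_q σ̃(−s−1) ũ_n(s+1) + [2s+2]_q σ̃(s) ũ_n(s−1) + (λ̃_n [2s]_q [2s+1]_q [2s+2]_q − [2s]_q σ̃(−s−1) − [2s+2]_q σ̃(s)) ũ_n(s) = 0. -/

import Mathlib

open Finset

/-- The symmetric q-number `[s]_q = (q^{s/2} - q^{-s/2})/(q^{1/2} - q^{-1/2})`. -/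
noncomputable def qnum (q s : ℝ) : ℝ :=
  (q ^ (s / 2) - q ^ (-s / 2)) / (q ^ ((1 : ℝ) / 2) - q ^ (-(1 : ℝ) / 2))

/-- The symmetric q-factorial `[n]_q! = ∏_{m=1}^n [m]_q`. -/
noncomputable def qfact (q : ℝ) (n : ℕ) : ℝ :=
  ∏ m ∈ Finset.range n, qnum q ((m : ℝ) + 1)

/-- The symmetric q-Pochhammer symbol `(a|q)_k = ∏_{m=0}^{k-1} [a+m]_q`. -/
noncomputable def qpoch (q a : ℝ) (k : ℕ) : ℝ :=
  ∏ m ∈ Finset.range k, qnum q (a + (m : ℝ))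

/-- The q-Racah polynomial `u_n^{α,β}(x(s),a,b)_q` on the lattice `x(s)=[s]_q[s+1]_q`. -/
noncomputable def racahU (q a b α β : ℝ) (n : ℕ) (s : ℝ) : ℝ :=
  qpoch q (a - b + 1) n * qpoch q (β + 1) n * qpoch q (a + b + α + 1) n / qfact q n *
    ∑ k ∈ Finset.range (n + 1),
      qpoch q (-(n : ℝ)) k * qpoch q (α + β + (n : ℝ) + 1) k * qpoch q (a - s) k *
          qpoch q (a + s + 1) k /
        (qpoch q 1 k * qpoch q (a - b + 1) k * qpoch q (β + 1) k *
          qpoch q (a + b + α + 1) k)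

/-- The alternative q-Racah polynomial `ũ_n^{α,β}(x(s),a,b)_q`. -/
noncomputable def racahUt (q a b α β : ℝ) (n : ℕ) (s : ℝ) : ℝ :=
  qpoch q (a - b + 1) n * qpoch q (2 * a - β + 1) n * qpoch q (a - b - α + 1) n / qfact q n *
    ∑ k ∈ Finset.range (n + 1),
      qpoch q (-(n : ℝ)) k * qpoch q (2 * a - 2 * b - α - β + (n : ℝ) + 1) k *
          qpoch q (a - s) k * qpoch q (a + s + 1) k /
        (qpoch q 1 k * qpoch q (a - b + 1) k * qpoch q (2 * a - β + 1) k *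
          qpoch q (a - b - α + 1) k)

/-- `σ(s) = [s-a]_q [s+b]_q [s+a-β]_q [b+α-s]_q`. -/
noncomputable def racahSigma (q a b α β s : ℝ) : ℝ :=
  qnum q (s - a) * qnum q (s + b) * qnum q (s + a - β) * qnum q (b + α - s)

/-- `σ(-s-1) = [s+a+1]_q [b-s-1]_q [s-a+β+1]_q [b+α+s+1]_q`. -/
noncomputable def racahSigmaM (q a b α β s : ℝ) : ℝ :=
  qnum q (s + a + 1) * qnum q (b - s - 1) * qnum q (s - a + β + 1) * qnum q (b + α + s + 1)

/-- `σ̃(s) = [s-a]_q [s+b]_q [s-a+β]_q [b+α+s]_q`. -/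
noncomputable def racahSigmaT (q a b α β s : ℝ) : ℝ :=
  qnum q (s - a) * qnum q (s + b) * qnum q (s - a + β) * qnum q (b + α + s)

/-- `σ̃(-s-1) = [s+a+1]_q [b-s-1]_q [s+a-β+1]_q [b+α-s-1]_q`. -/
noncomputable def racahSigmaTM (q a b α β s : ℝ) : ℝ :=
  qnum q (s + a + 1) * qnum q (b - s - 1) * qnum q (s + a - β + 1) * qnum q (b + α - s - 1)

/-- `τ_n(s)` for the q-Racah polynomials. -/
noncomputable def racahTau (q a b α β : ℝ) (n : ℕ) (s : ℝ) : ℝ :=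
  -qnum q (α + β + 2 * (n : ℝ) + 2) * qnum q (s + (n : ℝ) / 2) * qnum q (s + (n : ℝ) / 2 + 1) +
    qnum q (a + (n : ℝ) / 2 + 1) * qnum q (b - (n : ℝ) / 2 - 1) *
      qnum q (β + (n : ℝ) / 2 + 1 - a) * qnum q (b + α + (n : ℝ) / 2 + 1) -
    qnum q (a + (n : ℝ) / 2) * qnum q (b - (n : ℝ) / 2) * qnum q (β + (n : ℝ) / 2 - a) *
      qnum q (b + α + (n : ℝ) / 2)


section Aux

noncomputable def qe (q t : ℝ) : ℝ := q ^ (t / 2)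

lemma qe_pos {q : ℝ} (hq : 0 < q) (t : ℝ) : 0 < qe q t := Real.rpow_pos_of_pos hq _
lemma qe_ne {q : ℝ} (hq : 0 < q) (t : ℝ) : qe q t ≠ 0 := (qe_pos hq t).ne'
lemma qe_add {q : ℝ} (hq : 0 < q) (x y : ℝ) : qe q (x + y) = qe q x * qe q y := by
  unfold qe; rw [show (x + y)/2 = x/2 + y/2 by ring, Real.rpow_add hq]
lemma qe_sub {q : ℝ} (hq : 0 < q) (x y : ℝ) : qe q (x - y) = qe q x / qe q y := by
  unfold qe; rw [show (x - y)/2 = x/2 - y/2 by ring, Real.rpow_sub hq]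
lemma qe_neg {q : ℝ} (hq : 0 < q) (x : ℝ) : qe q (-x) = (qe q x)⁻¹ := by
  unfold qe; rw [show -x/2 = -(x/2) by ring, Real.rpow_neg hq.le]
lemma qe_two_mul {q : ℝ} (hq : 0 < q) (x : ℝ) : qe q (2*x) = qe q x * qe q x := by
  rw [show 2*x = x + x by ring, qe_add hq]
lemma qe_two {q : ℝ} (hq : 0 < q) : qe q 2 = qe q 1 * qe q 1 := by
  rw [show (2:ℝ) = 1 + 1 by norm_num, qe_add hq]
lemma qe_sq {q : ℝ} (hq : 0 < q) : qe q 1 * qe q 1 = q := by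
  rw [← qe_add hq]; unfold qe; norm_num
lemma qD_ne {q : ℝ} (hq0 : 0 < q) (hq1 : q ≠ 1) : qe q 1 - (qe q 1)⁻¹ ≠ 0 := by
  intro h
  rw [sub_eq_zero] at h
  have h2 : qe q 1 * qe q 1 = 1 := by
    nth_rewrite 2 [h]; exact mul_inv_cancel₀ (qe_ne hq0 1)
  exact hq1 (by rw [← qe_sq hq0, h2])
lemma qnum_eq {q : ℝ} (hq : 0 < q) (x : ℝ) :
    qnum q x = (qe q x - (qe q x)⁻¹) / (qe q 1 - (qe q 1)⁻¹) := by
  unfold qnum qe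
  rw [show -x/2 = -(x/2) by ring, Real.rpow_neg hq.le,
      show (-(1:ℝ))/2 = -((1:ℝ)/2) by ring, Real.rpow_neg hq.le]
lemma qnum_zero (q : ℝ) : qnum q 0 = 0 := by unfold qnum; norm_num
lemma rpow_right_inj {q : ℝ} (hq0 : 0 < q) (hq1 : q ≠ 1) {u v : ℝ}
    (h : q ^ u = q ^ v) : u = v := by
  rw [Real.rpow_def_of_pos hq0, Real.rpow_def_of_pos hq0] at h
  have hlog : Real.log q ≠ 0 := by
    intro h0
    exact hq1 (by rw [← Real.exp_log hq0, h0, Real.exp_zero])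
  exact mul_left_cancel₀ hlog (Real.exp_eq_exp.mp h)
lemma qnum_ne_zero {q : ℝ} (hq0 : 0 < q) (hq1 : q ≠ 1) {x : ℝ} (hx : x ≠ 0) :
    qnum q x ≠ 0 := by
  rw [qnum_eq hq0]
  refine div_ne_zero ?_ (qD_ne hq0 hq1)
  intro h
  rw [sub_eq_zero] at h
  have h2 : qe q x * qe q x = 1 := by
    nth_rewrite 2 [h]; exact mul_inv_cancel₀ (qe_ne hq0 x)
  have h3 : q ^ x = q ^ (0:ℝ) := by
    rw [Real.rpow_zero, ← h2]; unfold qe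
    rw [← Real.rpow_add hq0]; norm_num
  exact hx (rpow_right_inj hq0 hq1 h3)

lemma qpoch_zero (q x : ℝ) : qpoch q x 0 = 1 := by simp [qpoch]
lemma qpoch_one (q x : ℝ) : qpoch q x 1 = qnum q x := by simp [qpoch]
lemma qpoch_back (q x : ℝ) (k : ℕ) :
    qpoch q x (k+1) = qpoch q x k * qnum q (x + k) := Finset.prod_range_succ _ _
lemma qpoch_front (q x : ℝ) (k : ℕ) :
    qpoch q x (k+1) = qnum q x * qpoch q (x+1) k := by
  unfold qpoch
  rw [Finset.prod_range_succ', Nat.cast_zero, add_zero, mul_comm]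
  congr 1
  refine Finset.prod_congr rfl fun m _ => ?_
  congr 1
  push_cast
  ring
lemma qpoch_two_front (q x : ℝ) (j : ℕ) :
    qpoch q x (j+2) = qnum q x * qnum q (x+1) * qpoch q (x+2) j := by
  have h1 : j+2 = (j+1)+1 := rfl
  rw [h1, qpoch_front q x (j+1), qpoch_front q (x+1) j,
      show x+1+1 = x+2 by ring]
  ring
lemma qpoch_two_back (q x : ℝ) (j : ℕ) :
    qpoch q x (j+2) = qpoch q x j * qnum q (x + j) * qnum q (x + j + 1) := by
  have h1 : j+2 = (j+1)+1 := rfl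
  rw [h1, qpoch_back q x (j+1), qpoch_back q x j]
  push_cast
  rw [show x + ((j:ℝ)+1) = x + (j:ℝ) + 1 by ring]
lemma qpoch_front_back (q x : ℝ) (j : ℕ) :
    qpoch q x (j+2) = qnum q x * qpoch q (x+1) j * qnum q (x+1+j) := by
  have h1 : j+2 = (j+1)+1 := rfl
  rw [h1, qpoch_front q x (j+1), qpoch_back q (x+1) j]
  ring

noncomputable def myC (q a b α β : ℝ) (n k : ℕ) : ℝ :=
  qpoch q (-(n : ℝ)) k * qpoch q (2 * a - 2 * b - α - β + (n : ℝ) + 1) k /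
    (qpoch q 1 k * qpoch q (a - b + 1) k * qpoch q (2 * a - β + 1) k *
      qpoch q (a - b - α + 1) k)

noncomputable def myT (q a s : ℝ) (k : ℕ) : ℝ := qpoch q (a - s) k * qpoch q (a + s + 1) k

lemma myT_zero (q a s : ℝ) : myT q a s 0 = 1 := by simp [myT, qpoch_zero]

lemma racahUt_eq (q a b α β : ℝ) (n : ℕ) (s : ℝ) :
    racahUt q a b α β n s =
      (qpoch q (a - b + 1) n * qpoch q (2 * a - β + 1) n * qpoch q (a - b - α + 1) n /
        qfact q n) * ∑ k ∈ Finset.range (n+1), myC q a b α β n k * myT q a s k := by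
  unfold racahUt myC myT
  rw [Finset.mul_sum, Finset.mul_sum]
  exact Finset.sum_congr rfl fun k _ => by ring

set_option maxHeartbeats 1000000 in
lemma pureR (q : ℝ) (hq0 : 0 < q) (hq1 : q ≠ 1) (a b α β u v : ℝ) :
    qnum q (-u + v) * qnum q (2*a - 2*b - α - β + u + 1 + v)
      = qnum q u * qnum q (2*b - 2*a + α + β - u - 1)
        - qnum q v * qnum q (2*b - 2*a + α + β - v - 1) := by
  have hD := qD_ne hq0 hq1
  have h1 := qe_ne hq0 (1:ℝ)
  have ha := qe_ne hq0 a
  have hb := qe_ne hq0 b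
  have hal := qe_ne hq0 α
  have hbe := qe_ne hq0 β
  have hu := qe_ne hq0 u
  have hv := qe_ne hq0 v
  obtain ⟨d, hd⟩ : ∃ d, (qe q 1 - (qe q 1)⁻¹)⁻¹ = d := ⟨_, rfl⟩
  have hq' : ∀ x, qnum q x = (qe q x - (qe q x)⁻¹) * d := fun x => by
    rw [qnum_eq hq0, div_eq_mul_inv, hd]
  simp only [hq', qe_two_mul hq0, qe_add hq0, qe_sub hq0, qe_neg hq0, qe_two hq0]
  field_simp
  ring

set_option maxHeartbeats 4000000 in
lemma pureE1 (q a b α β s t : ℝ) (hq0 : 0 < q) (hq1 : q ≠ 1) :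
    qnum q (2*s) * racahSigmaTM q a b α β s * (qnum q (a-s-1) * qnum q (a+s+2))
      + qnum q (2*s+2) * racahSigmaT q a b α β s * (qnum q (a-s+1) * qnum q (a+s))
      + (t * (qnum q (2*s) * qnum q (2*s+1) * qnum q (2*s+2))
          - qnum q (2*s) * racahSigmaTM q a b α β s
          - qnum q (2*s+2) * racahSigmaT q a b α β s) *
        (qnum q (a-s) * qnum q (a+s+1))
    = qnum q (2*s) * qnum q (2*s+1) * qnum q (2*s+2) *
        ((t - qnum q 1 * qnum q (2*b-2*a+α+β-1-1)) * (qnum q (a-s) * qnum q (a+s+1))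
          - qnum q 1 * qnum q (a-b+1) * qnum q (2*a-β+1) * qnum q (a-b-α+1) * 1) := by
  have h1 := qe_ne hq0 (1:ℝ)
  have ha := qe_ne hq0 a
  have hb := qe_ne hq0 b
  have hal := qe_ne hq0 α
  have hbe := qe_ne hq0 β
  have hs := qe_ne hq0 s
  unfold racahSigmaTM racahSigmaT
  obtain ⟨d, hd⟩ : ∃ d, (qe q 1 - (qe q 1)⁻¹)⁻¹ = d := ⟨_, rfl⟩
  have hq' : ∀ x, qnum q x = (qe q x - (qe q x)⁻¹) * d := fun x => by
    rw [qnum_eq hq0, div_eq_mul_inv, hd]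
  simp only [hq', qe_two_mul hq0, qe_add hq0, qe_sub hq0, qe_neg hq0, qe_two hq0]
  field_simp
  ring

set_option maxHeartbeats 4000000 in
lemma pureE2 (q a b α β s t j : ℝ) (hq0 : 0 < q) (hq1 : q ≠ 1) :
    qnum q (2*s) * racahSigmaTM q a b α β s *
        (qnum q (a-s-1) * qnum q (a-s) * (qnum q (a+s+2+j) * qnum q (a+s+2+j+1)))
      + qnum q (2*s+2) * racahSigmaT q a b α β s *
        (qnum q (a-s+1+j) * qnum q (a-s+1+j+1) * (qnum q (a+s) * qnum q (a+s+1)))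
      + (t * (qnum q (2*s) * qnum q (2*s+1) * qnum q (2*s+2))
          - qnum q (2*s) * racahSigmaTM q a b α β s
          - qnum q (2*s+2) * racahSigmaT q a b α β s) *
        (qnum q (a-s) * qnum q (a-s+1+j) * (qnum q (a+s+1) * qnum q (a+s+2+j)))
    = qnum q (2*s) * qnum q (2*s+1) * qnum q (2*s+2) *
        ((t - qnum q (j+2) * qnum q (2*b-2*a+α+β-(j+2)-1)) *
            (qnum q (a-s) * qnum q (a-s+1+j) * (qnum q (a+s+1) * qnum q (a+s+2+j)))
          - qnum q (j+2) * qnum q (a-b+(j+2)) * qnum q (2*a-β+(j+2)) * qnum q (a-b-α+(j+2)) *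
            (qnum q (a-s) * qnum q (a+s+1))) := by
  have h1 := qe_ne hq0 (1:ℝ)
  have ha := qe_ne hq0 a
  have hb := qe_ne hq0 b
  have hal := qe_ne hq0 α
  have hbe := qe_ne hq0 β
  have hs := qe_ne hq0 s
  have hj := qe_ne hq0 j
  unfold racahSigmaTM racahSigmaT
  obtain ⟨d, hd⟩ : ∃ d, (qe q 1 - (qe q 1)⁻¹)⁻¹ = d := ⟨_, rfl⟩
  have hq' : ∀ x, qnum q x = (qe q x - (qe q x)⁻¹) * d := fun x => by
    rw [qnum_eq hq0, div_eq_mul_inv, hd]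
  simp only [hq', qe_two_mul hq0, qe_add hq0, qe_sub hq0, qe_neg hq0, qe_two hq0]
  field_simp
  ring

set_option maxHeartbeats 1000000 in
lemma keyLemma (q a b α β s t : ℝ) (hq0 : 0 < q) (hq1 : q ≠ 1) (k : ℕ) :
    qnum q (2*s) * racahSigmaTM q a b α β s * myT q a (s+1) k
      + qnum q (2*s+2) * racahSigmaT q a b α β s * myT q a (s-1) k
      + (t * (qnum q (2*s) * qnum q (2*s+1) * qnum q (2*s+2))
          - qnum q (2*s) * racahSigmaTM q a b α β s
          - qnum q (2*s+2) * racahSigmaT q a b α β s) * myT q a s k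
    = qnum q (2*s) * qnum q (2*s+1) * qnum q (2*s+2) *
        ((t - qnum q (k:ℝ) * qnum q (2*b-2*a+α+β-(k:ℝ)-1)) * myT q a s k
          - qnum q (k:ℝ) * qnum q (a-b+(k:ℝ)) * qnum q (2*a-β+(k:ℝ)) *
              qnum q (a-b-α+(k:ℝ)) * myT q a s (k-1)) := by
  match k with
  | 0 =>
    simp only [Nat.cast_zero, qnum_zero, myT_zero, Nat.zero_sub, zero_mul, mul_zero]
    ring
  | 1 =>
    simp only [myT, qpoch_one, Nat.cast_one, show (1:ℕ)-1 = 0 from rfl, qpoch_zero]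
    rw [show a-(s+1) = a-s-1 by ring, show a+(s+1)+1 = a+s+2 by ring,
        show a-(s-1) = a-s+1 by ring, show a+(s-1)+1 = a+s by ring]
    linear_combination pureE1 q a b α β s t hq0 hq1
  | (j+2) =>
    push_cast
    simp only [myT]
    rw [show a-(s+1) = a-s-1 by ring, show a+(s+1)+1 = a+s+2 by ring,
        show a-(s-1) = a-s+1 by ring, show a+(s-1)+1 = a+s by ring]
    rw [qpoch_two_front q (a-s-1) j, show a-s-1+1 = a-s by ring,
        show a-s-1+2 = a-s+1 by ring]
    rw [qpoch_two_back q (a+s+2) j]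
    rw [qpoch_two_back q (a-s+1) j]
    rw [qpoch_two_front q (a+s) j]
    rw [qpoch_front_back q (a-s) j]
    rw [qpoch_front_back q (a+s+1) j, show a+s+1+1 = a+s+2 by ring]
    rw [qpoch_front q (a-s) j]
    rw [qpoch_front q (a+s+1) j, show a+s+1+1 = a+s+2 by ring]
    linear_combination (qpoch q (a-s+1) j * qpoch q (a+s+2) j) *
      pureE2 q a b α β s t (j:ℝ) hq0 hq1

set_option maxHeartbeats 1000000 in
lemma recLemma (q a b α β : ℝ) (hq0 : 0 < q) (hq1 : q ≠ 1) (n : ℕ)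
    (hnz : qpoch q (a - b + 1) n * qpoch q (2 * a - β + 1) n *
      qpoch q (a - b - α + 1) n ≠ 0) (j : ℕ) (hj : j < n) :
    myC q a b α β n (j+1) *
        (qnum q ((j:ℝ)+1) * qnum q (a-b+((j:ℝ)+1)) * qnum q (2*a-β+((j:ℝ)+1)) *
          qnum q (a-b-α+((j:ℝ)+1)))
      = myC q a b α β n j *
          (qnum q (n:ℝ) * qnum q (2*b-2*a+α+β-(n:ℝ)-1)
            - qnum q (j:ℝ) * qnum q (2*b-2*a+α+β-(j:ℝ)-1)) := by
  have hX : qpoch q (a - b + 1) n ≠ 0 := fun h => hnz (by rw [h]; ring)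
  have hY : qpoch q (2 * a - β + 1) n ≠ 0 := fun h => hnz (by rw [h]; ring)
  have hZ : qpoch q (a - b - α + 1) n ≠ 0 := fun h => hnz (by rw [h]; ring)
  have hfX : ∀ m : ℕ, m < n → qnum q ((a-b+1)+(m:ℝ)) ≠ 0 := fun m hm h0 =>
    hX (Finset.prod_eq_zero (Finset.mem_range.mpr hm) h0)
  have hfY : ∀ m : ℕ, m < n → qnum q ((2*a-β+1)+(m:ℝ)) ≠ 0 := fun m hm h0 =>
    hY (Finset.prod_eq_zero (Finset.mem_range.mpr hm) h0)
  have hfZ : ∀ m : ℕ, m < n → qnum q ((a-b-α+1)+(m:ℝ)) ≠ 0 := fun m hm h0 =>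
    hZ (Finset.prod_eq_zero (Finset.mem_range.mpr hm) h0)
  have hPX : qpoch q (a-b+1) j ≠ 0 :=
    Finset.prod_ne_zero_iff.mpr fun m hm => hfX m ((Finset.mem_range.mp hm).trans_le hj.le)
  have hPY : qpoch q (2*a-β+1) j ≠ 0 :=
    Finset.prod_ne_zero_iff.mpr fun m hm => hfY m ((Finset.mem_range.mp hm).trans_le hj.le)
  have hPZ : qpoch q (a-b-α+1) j ≠ 0 :=
    Finset.prod_ne_zero_iff.mpr fun m hm => hfZ m ((Finset.mem_range.mp hm).trans_le hj.le)
  have hP1 : qpoch q 1 j ≠ 0 :=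
    Finset.prod_ne_zero_iff.mpr fun m _ =>
      qnum_ne_zero hq0 hq1 (by positivity)
  have hy1 : qnum q (1 + (j:ℝ)) ≠ 0 := qnum_ne_zero hq0 hq1 (by positivity)
  have hyX : qnum q ((a-b+1)+(j:ℝ)) ≠ 0 := hfX j hj
  have hyY : qnum q ((2*a-β+1)+(j:ℝ)) ≠ 0 := hfY j hj
  have hyZ : qnum q ((a-b-α+1)+(j:ℝ)) ≠ 0 := hfZ j hj
  unfold myC
  rw [qpoch_back q (-(n:ℝ)) j, qpoch_back q (2*a-2*b-α-β+(n:ℝ)+1) j,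
      qpoch_back q 1 j, qpoch_back q (a-b+1) j, qpoch_back q (2*a-β+1) j,
      qpoch_back q (a-b-α+1) j]
  rw [show (j:ℝ)+1 = 1+(j:ℝ) by ring]
  rw [show a-b+(1+(j:ℝ)) = a-b+1+(j:ℝ) by ring,
      show 2*a-β+(1+(j:ℝ)) = 2*a-β+1+(j:ℝ) by ring,
      show a-b-α+(1+(j:ℝ)) = a-b-α+1+(j:ℝ) by ring]
  rw [← pureR q hq0 hq1 a b α β (n:ℝ) (j:ℝ)]
  field_simp

end Aux

theorem stmt_12 (q : ℝ) (hq0 : 0 < q) (hq1 : q ≠ 1) (n : ℕ) (a b α β : ℝ)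
    (hnz : qpoch q (a - b + 1) n * qpoch q (2 * a - β + 1) n *
      qpoch q (a - b - α + 1) n ≠ 0) :
    ∀ s : ℝ,
      qnum q (2 * s) * racahSigmaTM q a b α β s * racahUt q a b α β n (s + 1) +
          qnum q (2 * s + 2) * racahSigmaT q a b α β s * racahUt q a b α β n (s - 1) +
          (qnum q (n : ℝ) * qnum q (2 * b - 2 * a + α + β - (n : ℝ) - 1) * qnum q (2 * s) *
                qnum q (2 * s + 1) * qnum q (2 * s + 2) -
              qnum q (2 * s) * racahSigmaTM q a b α β s -
              qnum q (2 * s + 2) * racahSigmaT q a b α β s) *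
            racahUt q a b α β n s = 0 := by
  intro s
  rw [racahUt_eq q a b α β n (s+1), racahUt_eq q a b α β n (s-1), racahUt_eq q a b α β n s]
  suffices h :
      qnum q (2*s) * racahSigmaTM q a b α β s *
          (∑ k ∈ Finset.range (n+1), myC q a b α β n k * myT q a (s+1) k)
        + qnum q (2*s+2) * racahSigmaT q a b α β s *
          (∑ k ∈ Finset.range (n+1), myC q a b α β n k * myT q a (s-1) k)
        + (qnum q (n:ℝ) * qnum q (2*b-2*a+α+β-(n:ℝ)-1) * qnum q (2*s) * qnum q (2*s+1) *
              qnum q (2*s+2)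
            - qnum q (2*s) * racahSigmaTM q a b α β s
            - qnum q (2*s+2) * racahSigmaT q a b α β s) *
          (∑ k ∈ Finset.range (n+1), myC q a b α β n k * myT q a s k) = 0 by
    linear_combination (qpoch q (a - b + 1) n * qpoch q (2 * a - β + 1) n *
      qpoch q (a - b - α + 1) n / qfact q n) * h
  have step : ∀ k ∈ Finset.range (n+1),
      qnum q (2*s) * racahSigmaTM q a b α β s * (myC q a b α β n k * myT q a (s+1) k)
        + qnum q (2*s+2) * racahSigmaT q a b α β s * (myC q a b α β n k * myT q a (s-1) k)
        + (qnum q (n:ℝ) * qnum q (2*b-2*a+α+β-(n:ℝ)-1) * qnum q (2*s) * qnum q (2*s+1) *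
              qnum q (2*s+2)
            - qnum q (2*s) * racahSigmaTM q a b α β s
            - qnum q (2*s+2) * racahSigmaT q a b α β s) * (myC q a b α β n k * myT q a s k)
      = qnum q (2*s) * qnum q (2*s+1) * qnum q (2*s+2) *
          ((qnum q (n:ℝ) * qnum q (2*b-2*a+α+β-(n:ℝ)-1)
              - qnum q (k:ℝ) * qnum q (2*b-2*a+α+β-(k:ℝ)-1)) *
            (myC q a b α β n k * myT q a s k))
        - qnum q (2*s) * qnum q (2*s+1) * qnum q (2*s+2) *
          ((qnum q (k:ℝ) * qnum q (a-b+(k:ℝ)) * qnum q (2*a-β+(k:ℝ)) *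
              qnum q (a-b-α+(k:ℝ))) *
            (myC q a b α β n k * myT q a s (k-1))) := fun k _ => by
    linear_combination myC q a b α β n k *
      keyLemma q a b α β s (qnum q (n:ℝ) * qnum q (2*b-2*a+α+β-(n:ℝ)-1)) hq0 hq1 k
  calc
    qnum q (2*s) * racahSigmaTM q a b α β s *
          (∑ k ∈ Finset.range (n+1), myC q a b α β n k * myT q a (s+1) k)
        + qnum q (2*s+2) * racahSigmaT q a b α β s *
          (∑ k ∈ Finset.range (n+1), myC q a b α β n k * myT q a (s-1) k)
        + (qnum q (n:ℝ) * qnum q (2*b-2*a+α+β-(n:ℝ)-1) * qnum q (2*s) * qnum q (2*s+1) *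
              qnum q (2*s+2)
            - qnum q (2*s) * racahSigmaTM q a b α β s
            - qnum q (2*s+2) * racahSigmaT q a b α β s) *
          (∑ k ∈ Finset.range (n+1), myC q a b α β n k * myT q a s k)
      = ∑ k ∈ Finset.range (n+1),
          (qnum q (2*s) * racahSigmaTM q a b α β s * (myC q a b α β n k * myT q a (s+1) k)
            + qnum q (2*s+2) * racahSigmaT q a b α β s *
                (myC q a b α β n k * myT q a (s-1) k)
            + (qnum q (n:ℝ) * qnum q (2*b-2*a+α+β-(n:ℝ)-1) * qnum q (2*s) * qnum q (2*s+1) *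
                  qnum q (2*s+2)
                - qnum q (2*s) * racahSigmaTM q a b α β s
                - qnum q (2*s+2) * racahSigmaT q a b α β s) *
              (myC q a b α β n k * myT q a s k)) := by
        rw [Finset.mul_sum, Finset.mul_sum, Finset.mul_sum, ← Finset.sum_add_distrib,
          ← Finset.sum_add_distrib]
    _ = ∑ k ∈ Finset.range (n+1),
          (qnum q (2*s) * qnum q (2*s+1) * qnum q (2*s+2) *
            ((qnum q (n:ℝ) * qnum q (2*b-2*a+α+β-(n:ℝ)-1)
                - qnum q (k:ℝ) * qnum q (2*b-2*a+α+β-(k:ℝ)-1)) *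
              (myC q a b α β n k * myT q a s k))
          - qnum q (2*s) * qnum q (2*s+1) * qnum q (2*s+2) *
            ((qnum q (k:ℝ) * qnum q (a-b+(k:ℝ)) * qnum q (2*a-β+(k:ℝ)) *
                qnum q (a-b-α+(k:ℝ))) *
              (myC q a b α β n k * myT q a s (k-1)))) := Finset.sum_congr rfl step
    _ = (∑ k ∈ Finset.range (n+1),
          qnum q (2*s) * qnum q (2*s+1) * qnum q (2*s+2) *
            ((qnum q (n:ℝ) * qnum q (2*b-2*a+α+β-(n:ℝ)-1)
                - qnum q (k:ℝ) * qnum q (2*b-2*a+α+β-(k:ℝ)-1)) *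
              (myC q a b α β n k * myT q a s k)))
        - (∑ k ∈ Finset.range (n+1),
          qnum q (2*s) * qnum q (2*s+1) * qnum q (2*s+2) *
            ((qnum q (k:ℝ) * qnum q (a-b+(k:ℝ)) * qnum q (2*a-β+(k:ℝ)) *
                qnum q (a-b-α+(k:ℝ))) *
              (myC q a b α β n k * myT q a s (k-1)))) := Finset.sum_sub_distrib _ _
    _ = 0 := by
        rw [Finset.sum_range_succ, Finset.sum_range_succ']
        simp only [sub_self, zero_mul, mul_zero, add_zero, Nat.cast_zero, qnum_zero,
          Nat.add_sub_cancel, Nat.cast_add, Nat.cast_one]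
        rw [← Finset.sum_sub_distrib]
        refine Finset.sum_eq_zero fun j hj => ?_
        linear_combination
          (-(qnum q (2*s) * qnum q (2*s+1) * qnum q (2*s+2)) * myT q a s j) *
            recLemma q a b α β hq0 hq1 n hnz j (Finset.mem_range.mp hj)
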